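/- Let R be a commutative ring with identity, S a multiplicative subset of R, n a positive integer, and I an ideal of R with I ∩ S = ∅. (i) If the extension I·R_S is an n-absorbing ideal of the localization R_S and Sat_S(I) = I : s for some s ∈ S, then I is an S-n-absorbing ideal of R. (ii) Conversely, if R is locally divided and I is an S-n-absorbing ideal of R, then I·R_S is an n-absorbing ideal of R_S and Sat_S(I) = I : s for some s ∈ S. -/

import Mathlib

/-- `I` is `S`-`n`-absorbing with associated element `s`. -/
def IsSNAbsorbingAssoc {R : Type*} [CommRing R] (s : R) (n : ℕ) (I : Ideal R) : Prop :=
  ∀ r : Fin (n + 1) → R, (∏ i, r i) ∈ I →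
    ∃ j : Fin (n + 1), s * ∏ i ∈ Finset.univ.erase j, r i ∈ I

/-- `I` is an `S`-`n`-absorbing ideal. -/
def IsSNAbsorbing {R : Type*} [CommRing R] (S : Set R) (n : ℕ) (I : Ideal R) : Prop :=
  ∃ s ∈ S, IsSNAbsorbingAssoc s n I
/-- `I` is an `n`-absorbing ideal. -/
def IsNAbsorbing {R : Type*} [CommRing R] (n : ℕ) (I : Ideal R) : Prop :=
  ∀ r : Fin (n + 1) → R, (∏ i, r i) ∈ I →
    ∃ j : Fin (n + 1), ∏ i ∈ Finset.univ.erase j, r i ∈ I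

/-- A commutative ring is divided if for every prime `P` and every element `a`,
either `a ∈ P` or `P ⊆ aT`. -/
def IsDividedRing (T : Type*) [CommRing T] : Prop :=
  ∀ P : Ideal T, P.IsPrime → ∀ a : T, a ∈ P ∨ P ≤ Ideal.span {a}

/-- `R` is locally divided if its localization at every maximal ideal is divided. -/
def IsLocallyDivided (R : Type*) [CommRing R] : Prop :=
  ∀ (M : Ideal R) (hM : M.IsMaximal),
    haveI : M.IsPrime := hM.isPrime
    IsDividedRing (Localization.AtPrime M)

section games
variable {A : Type*} [CommRing A]

lemma prod_ite_of_mem {ι : Type*} [DecidableEq ι] (s : Finset ι) (i₀ : ι) (h : i₀ ∈ s)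
    (a b : A) : (∏ i ∈ s, if i = i₀ then a else b) = a * b ^ (s.card - 1) := by
  rw [← Finset.mul_prod_erase s _ h, if_pos rfl]
  congr 1
  rw [Finset.prod_congr rfl (fun i hi => if_neg (Finset.ne_of_mem_erase hi)),
    Finset.prod_const, Finset.card_erase_of_mem h]

lemma prod_ite_of_not_mem {ι : Type*} [DecidableEq ι] (s : Finset ι) (i₀ : ι) (h : i₀ ∉ s)
    (a b : A) : (∏ i ∈ s, if i = i₀ then a else b) = b ^ s.card := by
  rw [Finset.prod_congr rfl (fun i hi => if_neg (fun he => h (by rwa [he] at hi))), Finset.prod_const]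

/-- The basic forced two-letter game. -/
lemma game {n : ℕ} {s : A} {J : Ideal A}
    (habs : IsSNAbsorbingAssoc s n J) {a b : A} (hab : a * b ^ n ∈ J) :
    s * b ^ n ∈ J ∨ s * (a * b ^ (n - 1)) ∈ J := by
  have hprod : (∏ i : Fin (n+1), if i = (0 : Fin (n+1)) then a else b) = a * b ^ n := by
    rw [prod_ite_of_mem _ _ (Finset.mem_univ _) a b, Finset.card_univ, Fintype.card_fin,
      Nat.add_sub_cancel]
  obtain ⟨j, hj⟩ := habs (fun i => if i = (0 : Fin (n+1)) then a else b)
    (by rw [hprod]; exact hab)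
  by_cases h0 : j = 0
  · left
    subst h0
    rwa [prod_ite_of_not_mem _ _ (Finset.notMem_erase _ _) a b,
      Finset.card_erase_of_mem (Finset.mem_univ _), Finset.card_univ, Fintype.card_fin,
      Nat.add_sub_cancel] at hj
  · right
    have h0' : (0 : Fin (n+1)) ∈ Finset.univ.erase j :=
      Finset.mem_erase.mpr ⟨fun he => h0 he.symm, Finset.mem_univ _⟩
    rwa [prod_ite_of_mem _ _ h0' a b,
      Finset.card_erase_of_mem (Finset.mem_univ _), Finset.card_univ, Fintype.card_fin,
      Nat.add_sub_cancel] at hj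

/-- Weighted game used for localizing the absorbing property of a colon ideal. -/
lemma game_wt {n : ℕ} {s : A} {J : Ideal A}
    (habs : IsSNAbsorbingAssoc s n J) {a b : A} (r : Fin (n+1) → A)
    (hab : (a * b ^ n) * ∏ i, r i ∈ J) :
    ∃ j : Fin (n+1), (s * (b ^ n)) * ∏ i ∈ Finset.univ.erase j, r i ∈ J ∨
      (s * (a * b ^ (n - 1))) * ∏ i ∈ Finset.univ.erase j, r i ∈ J := by
  have hprod : (∏ i : Fin (n+1), (if i = (0 : Fin (n+1)) then a else b) * r i)
      = (a * b ^ n) * ∏ i, r i := by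
    rw [Finset.prod_mul_distrib, prod_ite_of_mem _ _ (Finset.mem_univ _) a b,
      Finset.card_univ, Fintype.card_fin, Nat.add_sub_cancel]
  obtain ⟨j, hj⟩ := habs (fun i => (if i = (0 : Fin (n+1)) then a else b) * r i)
    (by rw [hprod]; exact hab)
  refine ⟨j, ?_⟩
  rw [Finset.prod_mul_distrib] at hj
  by_cases h0 : j = 0
  · left
    subst h0
    rwa [prod_ite_of_not_mem _ _ (Finset.notMem_erase _ _) a b,
      Finset.card_erase_of_mem (Finset.mem_univ _), Finset.card_univ, Fintype.card_fin,
      Nat.add_sub_cancel, ← mul_assoc] at hj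
  · right
    have h0' : (0 : Fin (n+1)) ∈ Finset.univ.erase j :=
      Finset.mem_erase.mpr ⟨fun he => h0 he.symm, Finset.mem_univ _⟩
    rwa [prod_ite_of_mem _ _ h0' a b,
      Finset.card_erase_of_mem (Finset.mem_univ _), Finset.card_univ, Fintype.card_fin,
      Nat.add_sub_cancel, ← mul_assoc] at hj

end games

section dividedlemmas
variable {T : Type*} [CommRing T]

lemma primes_linear (hd : IsDividedRing T) {p q : Ideal T}
    (hp : p.IsPrime) (hq : q.IsPrime) : p ≤ q ∨ q ≤ p := by
  by_cases h : q ≤ p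
  · right; exact h
  · left
    obtain ⟨a, haq, hap⟩ := SetLike.not_le_iff_exists.mp h
    rcases hd p hp a with h1 | h1
    · exact absurd h1 hap
    · exact h1.trans ((Ideal.span_singleton_le_iff_mem q).mpr haq)

lemma radical_isPrime_of_divided (hd : IsDividedRing T) {J : Ideal T}
    (hJ : J ≠ ⊤) : J.radical.IsPrime := by
  constructor
  · rw [Ne, Ideal.radical_eq_top]; exact hJ
  · intro a b hab
    by_cases ha : a ∈ J.radical
    · left; exact ha
    right
    rw [Ideal.radical_eq_sInf, Submodule.mem_sInf] at ha
    push_neg at ha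
    obtain ⟨p₀, hp₀mem, hap₀⟩ := ha
    obtain ⟨hp₀J, hp₀⟩ := hp₀mem
    rw [Ideal.radical_eq_sInf, Submodule.mem_sInf]
    rintro q ⟨hqJ, hq⟩
    have habp₀ : a * b ∈ p₀ := by
      have : J.radical ≤ p₀ := by
        rw [Ideal.radical_eq_sInf]; exact sInf_le ⟨hp₀J, hp₀⟩
      exact this hab
    have habq : a * b ∈ q := by
      have : J.radical ≤ q := by
        rw [Ideal.radical_eq_sInf]; exact sInf_le ⟨hqJ, hq⟩
      exact this hab
    rcases primes_linear hd hp₀ hq with hle | hle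
    · rcases hp₀.mem_or_mem habp₀ with h | h
      · exact absurd h hap₀
      · exact hle h
    · rcases hq.mem_or_mem habq with h | h
      · exact absurd (hle h) hap₀
      · exact h

/-- In a divided ring, an `n`-absorbing ideal is saturated with respect to elements
outside its radical. -/
lemma L1 (hd : IsDividedRing T) {n : ℕ} (hn : 0 < n) {J : Ideal T}
    (hJabs : IsNAbsorbing n J) {z u : T} (hu : u ∉ J.radical) (hzu : z * u ∈ J) : z ∈ J := by
  have hJtop : J ≠ ⊤ := by
    rintro rfl
    exact hu (Ideal.le_radical Submodule.mem_top)
  have hP := radical_isPrime_of_divided hd hJtop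
  have habs1 : IsSNAbsorbingAssoc 1 n J := by
    intro r hr
    obtain ⟨j, hj⟩ := hJabs r hr
    exact ⟨j, by rwa [one_mul]⟩
  have hz : ∀ k : ℕ, ∃ w, w ∈ J.radical ∧ z = u ^ k * w := by
    intro k
    induction k with
    | zero =>
      refine ⟨z, ?_, by simp⟩
      have hzP : z * u ∈ J.radical := Ideal.le_radical hzu
      rcases hP.mem_or_mem hzP with h | h
      · exact h
      · exact absurd h hu
    | succ k ih =>
      obtain ⟨w, hwP, hzw⟩ := ih
      have hwspan : w ∈ Ideal.span {u} := by
        rcases hd J.radical hP u with h | h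
        · exact absurd h hu
        · exact h hwP
      obtain ⟨w', hw'⟩ := Ideal.mem_span_singleton.mp hwspan
      refine ⟨w', ?_, ?_⟩
      · have : u * w' ∈ J.radical := by rw [← hw']; exact hwP
        rcases hP.mem_or_mem this with h | h
        · exact absurd h hu
        · exact h
      · rw [hzw, hw', pow_succ]; ring
  obtain ⟨w, hwP, hzw⟩ := hz n
  have hab : (u * w) * u ^ n ∈ J := by
    have : (u * w) * u ^ n = z * u := by rw [hzw]; ring
    rwa [this]
  rcases game habs1 hab with h | h
  · rw [one_mul] at h
    exact absurd (Ideal.le_radical h : u ^ n ∈ J.radical)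
      (fun hh => hu (hP.mem_of_pow_mem n hh))
  · rw [one_mul] at h
    have : u * w * u ^ (n - 1) = z := by
      rw [hzw]
      have : u * w * u ^ (n-1) = u ^ (1 + (n-1)) * w := by rw [pow_add, pow_one]; ring
      rw [this]
      congr 2
      omega
    rwa [this] at h

end dividedlemmas

section powergames
variable {A : Type*} [CommRing A]

/-- Anderson–Badawi: elements of the radical of an `n`-absorbing ideal have `n`-th power
in the ideal. -/
lemma F4 {n : ℕ} (hn : 0 < n) {J : Ideal A} (hJ : IsNAbsorbing n J) :
    ∀ m x, x ^ m ∈ J → x ^ n ∈ J := by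
  have habs1 : IsSNAbsorbingAssoc 1 n J := by
    intro r hr
    obtain ⟨j, hj⟩ := hJ r hr
    exact ⟨j, by rwa [one_mul]⟩
  intro m
  induction m using Nat.strong_induction_on with
  | _ m ih =>
    intro x hx
    by_cases hm : m ≤ n
    · have : x ^ n = x ^ m * x ^ (n - m) := by rw [← pow_add]; congr 1; omega
      rw [this]; exact J.mul_mem_right _ hx
    · have hab : x ^ (m - n) * x ^ n ∈ J := by
        rw [← pow_add]
        have : m - n + n = m := by omega
        rwa [this]
      rcases game habs1 hab with h | h
      · rwa [one_mul] at h
      · rw [one_mul] at h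
        refine ih (m - 1) (by omega) x ?_
        have : x ^ (m - n) * x ^ (n - 1) = x ^ (m - 1) := by rw [← pow_add]; congr 1; omega
        rwa [this] at h

end powergames

section finiteness
variable {A : Type*} [CommRing A]

/-- The radical of an `n`-absorbing ideal is `n`-absorbing. -/
lemma radical_isNAbsorbing {n : ℕ} (hn : 0 < n) {J : Ideal A} (hJ : IsNAbsorbing n J) :
    IsNAbsorbing n J.radical := by
  intro r hr
  obtain ⟨m, hm⟩ := Ideal.mem_radical_iff.mp hr
  have hxn : (∏ i, r i) ^ n ∈ J := F4 hn hJ m _ hm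
  rw [← Finset.prod_pow] at hxn
  obtain ⟨j, hj⟩ := hJ (fun i => r i ^ n) hxn
  refine ⟨j, Ideal.mem_radical_iff.mpr ⟨n, ?_⟩⟩
  rwa [Finset.prod_pow] at hj

/-- Almost nilpotence at a minimal prime, radical form. -/
lemma exists_mul_mem_radical_of_minimalPrime {W P : Ideal A}
    (hP : P ∈ W.minimalPrimes) {x : A} (hx : x ∈ P) :
    ∃ u, u ∉ P ∧ u * x ∈ W.radical := by
  have hPp : P.IsPrime := hP.1.1
  by_cases hWV : ∃ u, u ∉ P ∧ ∃ k, u * x ^ k ∈ W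
  · obtain ⟨u, huP, k, huk⟩ := hWV
    refine ⟨u, huP, Ideal.mem_radical_iff.mpr ⟨k + 1, ?_⟩⟩
    have he : (u * x) ^ (k+1) = (u * x ^ k) * (u ^ k * x) := by
      rw [mul_pow, pow_succ, pow_succ]; ring
    rw [he]
    exact W.mul_mem_right _ huk
  · exfalso
    push_neg at hWV
    set V : Submonoid A :=
      { carrier := {r | ∃ u, u ∉ P ∧ ∃ k, r = u * x ^ k},
        one_mem' := ⟨1, (Ideal.ne_top_iff_one P).mp hPp.ne_top, 0, by simp⟩,
        mul_mem' := by
          rintro r r' ⟨u, hu, k, rfl⟩ ⟨u', hu', k', rfl⟩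
          refine ⟨u * u', fun h => ?_, k + k', by ring⟩
          rcases hPp.mem_or_mem h with h | h
          · exact hu h
          · exact hu' h } with hV
    have hdisj : Disjoint (W : Set A) (V : Set A) := by
      rw [Set.disjoint_left]
      rintro r hrW ⟨u, huP, k, rfl⟩
      exact hWV u huP k hrW
    obtain ⟨Q, hQp, hWQ, hQV⟩ := Ideal.exists_le_prime_disjoint (I := W) V hdisj
    have hQP : Q ≤ P := by
      intro q hq
      by_contra hqP
      exact Set.disjoint_left.mp hQV hq ⟨q, hqP, 0, by simp⟩
    have hPQ : P ≤ Q := hP.2 ⟨hQp, hWQ⟩ hQP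
    exact Set.disjoint_left.mp hQV (hPQ hx)
      ⟨1, (Ideal.ne_top_iff_one P).mp hPp.ne_top, 1, by simp⟩

/-- In a locally divided ring, distinct minimal primes over an ideal are comaximal. -/
lemma minimalPrimes_comaximal (hdiv : IsLocallyDivided A) {W P P' : Ideal A}
    (hP : P ∈ W.minimalPrimes) (hP' : P' ∈ W.minimalPrimes) (hne : P ≠ P') :
    P ⊔ P' = ⊤ := by
  by_contra hne'
  obtain ⟨M, hMmax, hPM⟩ := Ideal.exists_le_maximal _ hne'
  haveI := hMmax.isPrime
  have hdivT := hdiv M hMmax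
  have hPle : P ≤ M := le_trans le_sup_left hPM
  have hP'le : P' ≤ M := le_trans le_sup_right hPM
  have hdisj1 : Disjoint (M.primeCompl : Set A) (P : Set A) := by
    rw [Set.disjoint_left]
    intro a ha haP
    exact ha (hPle haP)
  have hdisj2 : Disjoint (M.primeCompl : Set A) (P' : Set A) := by
    rw [Set.disjoint_left]
    intro a ha haP
    exact ha (hP'le haP)
  have hp1 : (P.map (algebraMap A (Localization.AtPrime M))).IsPrime :=
    IsLocalization.isPrime_of_isPrime_disjoint M.primeCompl _ P hP.1.1 hdisj1
  have hp2 : (P'.map (algebraMap A (Localization.AtPrime M))).IsPrime :=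
    IsLocalization.isPrime_of_isPrime_disjoint M.primeCompl _ P' hP'.1.1 hdisj2
  have hcomap1 : (P.map (algebraMap A (Localization.AtPrime M))).comap
      (algebraMap A (Localization.AtPrime M)) = P :=
    IsLocalization.comap_map_of_isPrime_disjoint M.primeCompl _ hP.1.1 hdisj1
  have hcomap2 : (P'.map (algebraMap A (Localization.AtPrime M))).comap
      (algebraMap A (Localization.AtPrime M)) = P' :=
    IsLocalization.comap_map_of_isPrime_disjoint M.primeCompl _ hP'.1.1 hdisj2
  rcases primes_linear hdivT hp1 hp2 with h | h
  · have hle : P ≤ P' := by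
      rw [← hcomap1, ← hcomap2]
      exact Ideal.comap_mono h
    exact hne (le_antisymm hle (hP'.2 ⟨hP.1.1, hP.1.2⟩ hle))
  · have hle : P' ≤ P := by
      rw [← hcomap1, ← hcomap2]
      exact Ideal.comap_mono h
    exact hne (le_antisymm (hP.2 ⟨hP'.1.1, hP'.1.2⟩ hle) hle)

/-- In a locally divided ring an `n`-absorbing ideal has finitely many minimal primes
(cf. Anderson–Badawi 2011, Thm. 2.14). -/
lemma minimalPrimes_finite_of_isNAbsorbing (hdiv : IsLocallyDivided A) {n : ℕ} (hn : 0 < n)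
    {W : Ideal A} (hW : IsNAbsorbing n W) : W.minimalPrimes.Finite := by
  classical
  by_contra hinf
  have hinf' : W.minimalPrimes.Infinite := hinf
  obtain ⟨t, hts, htfin, htcard⟩ := hinf'.exists_subset_ncard_eq (n+1)
  have hcard : htfin.toFinset.card = n + 1 := by
    rw [← Set.ncard_eq_toFinset_card t htfin]
    exact htcard
  set e := htfin.toFinset.equivFin with he
  set P : Fin (n+1) → Ideal A := fun i => ((e.symm (Fin.cast hcard.symm i)) : Ideal A)
    with hPdef
  have hPmem : ∀ i, P i ∈ W.minimalPrimes := by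
    intro i
    exact hts (htfin.mem_toFinset.mp (e.symm (Fin.cast hcard.symm i)).2)
  have hPp : ∀ i, (P i).IsPrime := fun i => (hPmem i).1.1
  have hPinj : Function.Injective P := by
    intro i j hij
    have h1 : e.symm (Fin.cast hcard.symm i) = e.symm (Fin.cast hcard.symm j) :=
      Subtype.ext hij
    have h2 := e.symm.injective h1
    have h3 := congrArg Fin.val h2
    rw [Fin.coe_cast, Fin.coe_cast] at h3
    exact Fin.ext h3
  have hcomax : ∀ i j, i ≠ j → ∃ a b : A, a ∈ P i ∧ b ∈ P j ∧ a + b = 1 := by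
    intro i j hij
    have h := minimalPrimes_comaximal hdiv (hPmem i) (hPmem j) (fun h => hij (hPinj h))
    have h1 : (1:A) ∈ P i ⊔ P j := by rw [h]; exact Submodule.mem_top
    obtain ⟨a, ha, b, hb, hab⟩ := Submodule.mem_sup.mp h1
    exact ⟨a, b, ha, hb, hab⟩
  choose! a b ha hb hab using hcomax
  set eE : Fin (n+1) → A := fun i => ∏ j ∈ Finset.univ.erase i, b i j with heE
  have heP : ∀ i j, i ≠ j → eE i ∈ P j := by
    intro i j hij
    have hj : j ∈ Finset.univ.erase i :=
      Finset.mem_erase.mpr ⟨fun h => hij h.symm, Finset.mem_univ _⟩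
    have hsplit : eE i = b i j * ∏ k ∈ (Finset.univ.erase i).erase j, b i k := by
      simp only [heE]
      exact (Finset.mul_prod_erase _ _ hj).symm
    rw [hsplit]
    exact Ideal.mul_mem_right _ _ (hb i j hij)
  set d : Fin (n+1) → A := fun i => 1 - eE i with hd
  have hdP : ∀ i, d i ∈ P i := by
    intro i
    rw [← Ideal.Quotient.eq_zero_iff_mem]
    have h1 : (Ideal.Quotient.mk (P i)) (eE i) = 1 := by
      simp only [heE]
      rw [map_prod]
      refine Finset.prod_eq_one fun j hj => ?_
      have hij : i ≠ j := fun h => (Finset.mem_erase.mp hj).1 h.symm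
      have hb' : b i j = 1 - a i j := by
        linear_combination hab i j hij
      rw [hb', map_sub, map_one, Ideal.Quotient.eq_zero_iff_mem.mpr (ha i j hij), sub_zero]
    have h2 : d i = 1 - eE i := rfl
    rw [h2, map_sub, map_one, h1, sub_self]
  have hdnot : ∀ i j, i ≠ j → d i ∉ P j := by
    intro i j hij hmem
    have h1 : (1:A) ∈ P j := by
      have h2 : (1:A) = d i + eE i := by rw [hd]; ring
      rw [h2]
      exact Ideal.add_mem _ hmem (heP i j hij)
    exact (hPp j).ne_top (Ideal.eq_top_of_isUnit_mem _ h1 isUnit_one)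
  have hu : ∀ i, ∃ u, u ∉ P i ∧ u * d i ∈ W.radical := fun i =>
    exists_mul_mem_radical_of_minimalPrime (hPmem i) (hdP i)
  choose u huP hud using hu
  set uhat : A := ∑ i, eE i * u i with huhatdef
  have huhatP : ∀ j, uhat ∉ P j := by
    intro j hmem
    have h1 : uhat - u j ∈ P j := by
      have he2 : uhat - u j = (∑ i ∈ Finset.univ.erase j, eE i * u i) + (eE j * u j - u j) := by
        rw [huhatdef, ← Finset.add_sum_erase _ _ (Finset.mem_univ j)]
        ring
      rw [he2]
      refine Ideal.add_mem _ (Ideal.sum_mem _ fun i hi => ?_) ?_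
      · exact Ideal.mul_mem_right _ _ (heP i j (Finset.mem_erase.mp hi).1)
      · have he3 : eE j * u j - u j = -(d j * u j) := by rw [hd]; ring
        rw [he3]
        exact Submodule.neg_mem _ (Ideal.mul_mem_right _ _ (hdP j))
    have h2 : u j ∈ P j := by
      have he4 : u j = uhat - (uhat - u j) := by ring
      rw [he4]
      exact Ideal.sub_mem _ hmem h1
    exact huP j h2
  have hJabs : IsNAbsorbing n W.radical := radical_isNAbsorbing hn hW
  set r : Fin (n+1) → A := fun i => (if i = 0 then uhat else 1) * d i with hr
  have hprod : (∏ i, r i) ∈ W.radical := by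
    have h1 : (∏ i, r i) = uhat * ∏ i, d i := by
      rw [hr, Finset.prod_mul_distrib, prod_ite_of_mem _ _ (Finset.mem_univ _) uhat 1,
        one_pow, mul_one]
    rw [h1, huhatdef, Finset.sum_mul]
    refine Ideal.sum_mem _ fun i _ => ?_
    have h2 : eE i * u i * ∏ j, d j = (u i * d i) * (eE i * ∏ j ∈ Finset.univ.erase i, d j) := by
      rw [← Finset.mul_prod_erase _ _ (Finset.mem_univ i)]
      ring
    rw [h2]
    exact Ideal.mul_mem_right _ _ (hud i)
  obtain ⟨j, hj⟩ := hJabs r hprod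
  have hWPj : W.radical ≤ P j := ((hPp j).radical_le_iff).mpr (hPmem j).1.2
  have hjj : (∏ i ∈ Finset.univ.erase j, r i) ∈ P j := hWPj hj
  haveI := hPp j
  rw [Ideal.IsPrime.prod_mem_iff] at hjj
  obtain ⟨i, hi, hri⟩ := hjj
  have hij : i ≠ j := (Finset.mem_erase.mp hi).1
  rw [hr] at hri
  rcases (hPp j).mem_or_mem hri with h | h
  · by_cases h0 : i = 0
    · rw [if_pos h0] at h
      exact huhatP j h
    · rw [if_neg h0] at h
      exact (hPp j).ne_top (Ideal.eq_top_of_isUnit_mem _ h isUnit_one)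
  · exact hdnot i j hij h

end finiteness

section helpers
variable {R : Type*} [CommRing R] (S : Submonoid R) (I : Ideal R)

lemma algebraMap_mem_map_iff (x : R) :
    algebraMap R (Localization S) x ∈ I.map (algebraMap R (Localization S)) ↔
      ∃ t ∈ S, x * t ∈ I := by
  rw [← IsLocalization.mk'_one (M := S) (Localization S) x,
    IsLocalization.mk'_mem_map_algebraMap_iff S]
  exact ⟨fun ⟨t, ht, h⟩ => ⟨t, ht, by rwa [mul_comm]⟩,
    fun ⟨t, ht, h⟩ => ⟨t, ht, by rwa [mul_comm]⟩⟩

lemma dir1 (n : ℕ)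
    (habs : IsNAbsorbing n (I.map (algebraMap R (Localization S))))
    (s : R)
    (hsat : {x : R | ∃ t ∈ S, x * t ∈ I} = (I.colon (Ideal.span {s}) : Set R)) :
    IsSNAbsorbingAssoc s n I := by
  intro r hr
  have h1 : (∏ i, (algebraMap R (Localization S)) (r i)) ∈
      I.map (algebraMap R (Localization S)) := by
    rw [← map_prod]; exact Ideal.mem_map_of_mem _ hr
  obtain ⟨j, hj⟩ := habs (fun i => algebraMap R (Localization S) (r i)) h1
  refine ⟨j, ?_⟩
  rw [← map_prod, algebraMap_mem_map_iff] at hj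
  have h2 : (∏ i ∈ Finset.univ.erase j, r i) ∈ {x : R | ∃ t ∈ S, x * t ∈ I} := hj
  rw [hsat] at h2
  have h3 := Ideal.mem_colon_span_singleton.mp h2
  rwa [mul_comm] at h3

lemma dir2a (n : ℕ) (s : R) (hsS : s ∈ S) (habs : IsSNAbsorbingAssoc s n I) :
    IsNAbsorbing n (I.map (algebraMap R (Localization S))) := by
  intro r hr
  have hrep : ∀ i, ∃ p : R × S, r i * algebraMap R (Localization S) (p.2 : R)
      = algebraMap R (Localization S) p.1 := fun i => IsLocalization.surj S (r i)
  choose p hp using hrep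
  have key : ∀ E : Finset (Fin (n+1)), (∏ i ∈ E, r i) *
      algebraMap R (Localization S) (∏ i ∈ E, ((p i).2 : R)) =
      algebraMap R (Localization S) (∏ i ∈ E, (p i).1) := by
    intro E
    rw [map_prod, map_prod, ← Finset.prod_mul_distrib]
    exact Finset.prod_congr rfl fun i _ => hp i
  have hfx : algebraMap R (Localization S) (∏ i, (p i).1) ∈
      I.map (algebraMap R (Localization S)) := by
    rw [← key Finset.univ]
    exact Ideal.mul_mem_right _ _ hr
  rw [algebraMap_mem_map_iff] at hfx
  obtain ⟨w, hwS, hw⟩ := hfx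
  set r' : Fin (n+1) → R := fun i => (if i = 0 then w else 1) * (p i).1 with hr'
  have hprod : (∏ i, r' i) ∈ I := by
    have : (∏ i, r' i) = w * ∏ i, (p i).1 := by
      rw [hr', Finset.prod_mul_distrib, Finset.prod_ite_eq' Finset.univ (0 : Fin (n+1))
        (fun _ => w)]
      simp
    rw [this, mul_comm]
    exact hw
  obtain ⟨j, hj⟩ := habs r' hprod
  refine ⟨j, ?_⟩
  have herase : (∏ i ∈ Finset.univ.erase j, r' i) =
      (if (0 : Fin (n+1)) ∈ Finset.univ.erase j then w else 1) *
        ∏ i ∈ Finset.univ.erase j, (p i).1 := by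
    rw [hr', Finset.prod_mul_distrib,
      Finset.prod_ite_eq' (Finset.univ.erase j) (0 : Fin (n+1)) (fun _ => w)]
  have hσ : ∃ σ ∈ S, (∏ i ∈ Finset.univ.erase j, (p i).1) * σ ∈ I := by
    by_cases h0 : (0 : Fin (n+1)) ∈ Finset.univ.erase j
    · refine ⟨s * w, S.mul_mem hsS hwS, ?_⟩
      have hh := hj
      rw [herase, if_pos h0] at hh
      have heq : (∏ i ∈ Finset.univ.erase j, (p i).1) * (s * w)
          = s * (w * ∏ i ∈ Finset.univ.erase j, (p i).1) := by ring
      rw [heq]; exact hh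
    · refine ⟨s, hsS, ?_⟩
      have hh := hj
      rw [herase, if_neg h0, one_mul] at hh
      rwa [mul_comm]
  obtain ⟨σ, hσS, hσI⟩ := hσ
  have hNmem : algebraMap R (Localization S) (∏ i ∈ Finset.univ.erase j, (p i).1) ∈
      I.map (algebraMap R (Localization S)) := by
    rw [algebraMap_mem_map_iff]
    exact ⟨σ, hσS, hσI⟩
  have hD : (∏ i ∈ Finset.univ.erase j, ((p i).2 : R)) ∈ S :=
    Submonoid.prod_mem S (fun i _ => (p i).2.2)
  have hu : IsUnit (algebraMap R (Localization S)
      (∏ i ∈ Finset.univ.erase j, ((p i).2 : R))) :=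
    IsLocalization.map_units (Localization S) ⟨_, hD⟩
  rw [← Ideal.unit_mul_mem_iff_mem _ hu, mul_comm, key (Finset.univ.erase j)]
  exact hNmem


end helpers

section hardpart
variable {R : Type*} [CommRing R]

lemma beta (S : Submonoid R) (n : ℕ) (I : Ideal R) (hn : 0 < n)
    (hIS : Disjoint (I : Set R) (S : Set R)) {s : R} (hsS : s ∈ S)
    (habs : IsSNAbsorbingAssoc s n I) :
    ∀ a x, x * s ^ a ∈ I → x * s ^ (2*n - 1) ∈ I := by
  intro a
  induction a using Nat.strong_induction_on with
  | _ a ih =>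
    intro x hx
    by_cases ha : a ≤ 2*n - 1
    · have he : x * s ^ (2*n - 1) = (x * s ^ a) * s ^ (2*n - 1 - a) := by
        rw [mul_assoc, ← pow_add]
        congr 2
        omega
      rw [he]; exact I.mul_mem_right _ hx
    · have ha2 : 2*n ≤ a := by omega
      have hab : (x * s ^ (a - 2*n)) * (s^2) ^ n ∈ I := by
        have he : (x * s ^ (a - 2*n)) * (s^2) ^ n = x * s ^ a := by
          rw [← pow_mul, mul_assoc, ← pow_add]
          congr 2
          omega
        rwa [he]
      rcases game habs hab with h | h
      · exfalso
        refine Set.disjoint_left.mp hIS h ?_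
        exact S.mul_mem hsS (S.pow_mem (S.pow_mem hsS 2) n)
      · refine ih (a-1) (by omega) x ?_
        have he : s * (x * s ^ (a - 2*n) * (s^2) ^ (n-1))
            = x * s ^ ((a - 2*n) + 2*(n-1) + 1) := by
          rw [← pow_mul, pow_add, pow_add, pow_one]; ring
        rw [he] at h
        have h2 : (a - 2*n) + 2*(n-1) + 1 = a - 1 := by omega
        rwa [h2] at h

lemma dir2b (S : Submonoid R) (n : ℕ) (I : Ideal R) (hn : 0 < n)
    (hIS : Disjoint (I : Set R) (S : Set R))
    (hdiv : IsLocallyDivided R) {s : R} (hsS : s ∈ S) (habs : IsSNAbsorbingAssoc s n I) :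
    ∃ σ ∈ S, {x : R | ∃ t ∈ S, x * t ∈ I} = (I.colon (Ideal.span {σ}) : Set R) := by
  classical
  set W := I.colon (Ideal.span {s ^ (2*n-1)}) with hW
  have hWmem : ∀ x, x ∈ W ↔ x * s ^ (2*n-1) ∈ I := fun x => Ideal.mem_colon_span_singleton
  have hIW : I ≤ W := fun x hx => (hWmem x).mpr (I.mul_mem_right _ hx)
  have hβ := beta S n I hn hIS hsS habs
  have hsmS : s ^ (2*n-1) ∈ S := S.pow_mem hsS _
  -- W is n-absorbing
  have hWabs : IsNAbsorbing n W := by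
    intro r hr
    have h1 : (∏ i, r i) * s ^ (2*n-1) ∈ I := (hWmem _).mp hr
    have hr' : ((1:R) * (s^2) ^ n) * ∏ i, r i ∈ I := by
      have hx : (1:R) * (s^2) ^ n = s ^ (2*n - 1) * s := by
        rw [one_mul, ← pow_succ, Nat.sub_add_cancel (by omega : 1 ≤ 2*n), ← pow_mul]
      have he : ((1:R) * (s^2) ^ n) * ∏ i, r i = ((∏ i, r i) * s ^ (2*n-1)) * s := by
        rw [hx]; ring
      rw [he]; exact I.mul_mem_right _ h1
    obtain ⟨j, hj⟩ := game_wt habs r hr'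
    refine ⟨j, (hWmem _).mpr ?_⟩
    rcases hj with h | h
    · have hx : s * ((s^2) ^ n) = s ^ (2*n + 1) := by
        rw [← pow_mul, ← pow_succ']
      have he : (s * ((s^2) ^ n)) * ∏ i ∈ Finset.univ.erase j, r i
          = (∏ i ∈ Finset.univ.erase j, r i) * s ^ (2*n + 1) := by
        rw [hx]; ring
      rw [he] at h
      exact hβ _ _ h
    · have hx : s * ((1:R) * (s^2) ^ (n-1)) = s ^ (2*(n-1) + 1) := by
        rw [one_mul, ← pow_mul, ← pow_succ']
      have he : (s * ((1:R) * (s^2) ^ (n-1))) * ∏ i ∈ Finset.univ.erase j, r i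
          = (∏ i ∈ Finset.univ.erase j, r i) * s ^ (2*(n-1) + 1) := by
        rw [hx]; ring
      rw [he] at h
      have h2 : 2*(n-1) + 1 = 2*n - 1 := by omega
      rwa [h2] at h
  -- the set of bad minimal primes is finite (Anderson–Badawi, Thm 2.14)
  set Bad : Set (Ideal R) := {P | P ∈ W.minimalPrimes ∧ ∃ v ∈ S, v ∈ P} with hBad
  have hBadFin : Bad.Finite :=
    (minimalPrimes_finite_of_isNAbsorbing hdiv hn hWabs).subset (fun P hP => hP.1)
  set g : Ideal R → R := fun P => if h : ∃ v, v ∈ S ∧ v ∈ P then h.choose else 1 with hg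
  have hg1 : ∀ P, g P ∈ S := by
    intro P
    by_cases h : ∃ v, v ∈ S ∧ v ∈ P
    · simp only [hg, dif_pos h]; exact h.choose_spec.1
    · simp only [hg, dif_neg h]; exact S.one_mem
  have hg2 : ∀ P, (∃ v, v ∈ S ∧ v ∈ P) → g P ∈ P := by
    intro P h
    simp only [hg, dif_pos h]; exact h.choose_spec.2
  set σC : R := ∏ P ∈ hBadFin.toFinset, (g P) ^ n with hσC
  have hσCS : σC ∈ S := S.prod_mem fun P _ => S.pow_mem (hg1 P) n
  -- main claim
  have main : ∀ y t, t ∈ S → y * t ∈ I → y * σC ∈ W := by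
    intro y t htS hyt
    by_contra hyW
    set A := W.colon (Ideal.span {y * σC}) with hA
    have hAtop : A ≠ ⊤ := by
      intro h
      apply hyW
      have h1 : (1:R) ∈ A := by rw [h]; exact Submodule.mem_top
      have h2 := Ideal.mem_colon_span_singleton.mp h1
      rwa [one_mul] at h2
    obtain ⟨M, hMmax, hAM⟩ := Ideal.exists_le_maximal A hAtop
    haveI := hMmax.isPrime
    have hdivT : IsDividedRing (Localization.AtPrime M) := hdiv M hMmax
    have hWabs1 : IsSNAbsorbingAssoc 1 n W := by
      intro r hr
      obtain ⟨j, hj⟩ := hWabs r hr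
      exact ⟨j, by rwa [one_mul]⟩
    have hJabs : IsNAbsorbing n (W.map (algebraMap R (Localization M.primeCompl))) :=
      dir2a M.primeCompl W n 1 M.primeCompl.one_mem hWabs1
    set J := W.map (algebraMap R (Localization M.primeCompl)) with hJdef
    have hcontr : ∀ u : R, u ∈ M.primeCompl → u * (y * σC) ∈ W → False := by
      intro u huM huW
      exact huM (hAM (Ideal.mem_colon_span_singleton.mpr huW))
    have hJtop : J ≠ ⊤ := by
      intro htop
      have h1 : algebraMap R (Localization M.primeCompl) 1 ∈ J := by
        rw [htop]; exact Submodule.mem_top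
      obtain ⟨u, huM, hu⟩ := (algebraMap_mem_map_iff M.primeCompl W 1).mp h1
      rw [one_mul] at hu
      exact hcontr u huM (W.mul_mem_right _ hu)
    have hPrime := radical_isPrime_of_divided hdivT hJtop
    by_cases htQ : algebraMap R (Localization M.primeCompl) t ∈ J.radical
    · -- t lands in the radical: use the bad-prime product
      set Qh := J.radical.comap (algebraMap R (Localization M.primeCompl)) with hQh
      haveI hQprime : Qh.IsPrime := Ideal.IsPrime.comap _
      have hWQ : W ≤ Qh := fun x hx =>
        Ideal.mem_comap.mpr (Ideal.le_radical (Ideal.mem_map_of_mem _ hx))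
      have hQM : Qh ≤ M := by
        intro q hq
        by_contra hqM
        have hq' : q ∈ M.primeCompl := hqM
        have hunit : IsUnit (algebraMap R (Localization M.primeCompl) q) :=
          IsLocalization.map_units (Localization M.primeCompl) ⟨q, hq'⟩
        have h2 : J.radical = ⊤ := Ideal.eq_top_of_isUnit_mem _ (Ideal.mem_comap.mp hq) hunit
        exact hJtop (Ideal.radical_eq_top.mp h2)
      have hQmin : Qh ∈ W.minimalPrimes := by
        refine ⟨⟨hQprime, hWQ⟩, ?_⟩
        rintro P' ⟨hP'p, hWP'⟩ hP'le q hq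
        obtain ⟨k, hk⟩ := Ideal.mem_radical_iff.mp (Ideal.mem_comap.mp hq)
        rw [← map_pow] at hk
        obtain ⟨u, huM, hu⟩ := (algebraMap_mem_map_iff M.primeCompl W _).mp hk
        have huP' : u ∉ P' := fun hmem => huM (hQM (hP'le hmem))
        have hqk : q ^ k * u ∈ P' := hWP' hu
        exact hP'p.mem_of_pow_mem _ ((hP'p.mem_or_mem hqk).resolve_right huP')
      have hQbad : Qh ∈ Bad := ⟨hQmin, t, htS, Ideal.mem_comap.mpr htQ⟩
      obtain ⟨k, hk⟩ := Ideal.mem_radical_iff.mp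
        (Ideal.mem_comap.mp (hg2 Qh ⟨t, htS, Ideal.mem_comap.mpr htQ⟩))
      have h2 : (algebraMap R (Localization M.primeCompl) (g Qh)) ^ n ∈ J :=
        F4 hn hJabs k _ hk
      have h3' : algebraMap R (Localization M.primeCompl) σC ∈ J := by
        rw [hσC, ← Finset.mul_prod_erase _ (fun P => (g P)^n)
          (hBadFin.mem_toFinset.mpr hQbad), map_mul, map_pow]
        exact Ideal.mul_mem_right _ _ h2
      have h3 : algebraMap R (Localization M.primeCompl) (y * σC) ∈ J := by
        rw [map_mul]; exact Ideal.mul_mem_left _ _ h3'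
      obtain ⟨u, huM, hu⟩ := (algebraMap_mem_map_iff M.primeCompl W _).mp h3
      refine hcontr u huM ?_
      rwa [mul_comm] at hu
    · -- t survives: the ideal is saturated at this localization
      have hytW : algebraMap R (Localization M.primeCompl) y *
          algebraMap R (Localization M.primeCompl) t ∈ J := by
        rw [← map_mul]
        exact Ideal.mem_map_of_mem _ (hIW hyt)
      have hyJ := L1 hdivT hn hJabs htQ hytW
      obtain ⟨u, huM, hu⟩ := (algebraMap_mem_map_iff M.primeCompl W _).mp hyJ
      refine hcontr u huM ?_
      have he : u * (y * σC) = (y * u) * σC := by ring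
      rw [he]
      exact W.mul_mem_right _ hu
  -- conclude
  refine ⟨σC * s ^ (2*n-1), S.mul_mem hσCS hsmS, ?_⟩
  ext y
  simp only [Set.mem_setOf_eq, SetLike.mem_coe, Ideal.mem_colon_span_singleton]
  constructor
  · rintro ⟨t, htS, hyt⟩
    have h1 := (hWmem _).mp (main y t htS hyt)
    rwa [mul_assoc] at h1
  · intro h
    exact ⟨σC * s ^ (2*n-1), S.mul_mem hσCS hsmS, h⟩

end hardpart

theorem stmt_14 {R : Type*} [CommRing R] (S : Submonoid R) (n : ℕ) (hn : 0 < n)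
    (I : Ideal R) (hIS : Disjoint (I : Set R) (S : Set R)) :
    ((IsNAbsorbing n (I.map (algebraMap R (Localization S))) ∧
        ∃ s ∈ S, {x : R | ∃ t ∈ S, x * t ∈ I} = (I.colon (Ideal.span {s}) : Set R)) →
      IsSNAbsorbing (S : Set R) n I) ∧
    (IsLocallyDivided R → IsSNAbsorbing (S : Set R) n I →
      IsNAbsorbing n (I.map (algebraMap R (Localization S))) ∧
        ∃ s ∈ S, {x : R | ∃ t ∈ S, x * t ∈ I} = (I.colon (Ideal.span {s}) : Set R)) := by
  constructor
  · rintro ⟨habs, s, hsS, hsat⟩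
    exact ⟨s, hsS, dir1 S I n habs s hsat⟩
  · rintro hdiv ⟨s, hsS, habs⟩
    exact ⟨dir2a S I n s hsS habs, dir2b S n I hn hIS hdiv hsS habs⟩
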